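/- arXiv:2604.11651 — 4 statements merged into one kernel-verified Lean document; each statement's English description precedes it below -/
import Mathlib

section
/- Let n ≥ 4 be even and let C_n be the cycle graph on n vertices. Then the discrete Borsuk number of C_n equals 2, i.e., b(C_n) = 2. -/
open SimpleGraph

variable {V : Type*}

/-- A *Borsuk partition* of a finite simple graph `G` is a partition of its vertex set into
(nonempty) parts such that the subgraph induced on each part has (extended) diameter strictly
smaller than the (extended) diameter of `G`. -/
def IsBorsukPartition [Fintype V] [DecidableEq V] (G : SimpleGraph V)
    (P : Finpartition (Finset.univ : Finset V)) : Prop :=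
  ∀ s ∈ P.parts, (G.induce (s : Set V)).ediam < G.ediam

/-- The *discrete Borsuk number* of a finite simple graph `G`: the minimum number of parts
of a Borsuk partition of `G`. -/
noncomputable def borsukNumber [Fintype V] [DecidableEq V] (G : SimpleGraph V) : ℕ :=
  sInf {n | ∃ P : Finpartition (Finset.univ : Finset V),
    IsBorsukPartition G P ∧ P.parts.card = n}


private lemma edist_hom_le {W : Type*} {G : SimpleGraph V} {G' : SimpleGraph W}
    (f : G →g G') (u v : V) : G'.edist (f u) (f v) ≤ G.edist u v := by
  rcases eq_or_ne (G.edist u v) ⊤ with h | h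
  · simp [h]
  · obtain ⟨p, hp⟩ := SimpleGraph.exists_walk_of_edist_ne_top h
    calc G'.edist (f u) (f v) ≤ (p.map f).length := SimpleGraph.edist_le _
      _ = (p.length : ℕ∞) := by rw [SimpleGraph.Walk.length_map]
      _ = G.edist u v := hp

/-- Along a walk in the cycle graph, the circular distance is a lower bound on the length. -/
private lemma cycle_walk_length {n : ℕ} {u v : Fin n} (w : (cycleGraph n).Walk u v) :
    min (v - u).val (n - (v - u).val) ≤ w.length := by
  haveI : NeZero n := ⟨fun h => by subst h; exact u.elim0⟩
  induction w with
  | nil => simp [sub_self]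
  | @cons u x v h p ih =>
    have hadj := (cycleGraph_adj').mp h
    have hn2 : 2 ≤ n := by
      rcases hadj with h1 | h1
      · have := (u - x).isLt; omega
      · have := (x - u).isLt; omega
    have key : min (v - u).val (n - (v - u).val)
        ≤ min (v - x).val (n - (v - x).val) + 1 := by
      have hvu : v - u = (v - x) + (x - u) := by abel
      set e := v - x with he
      have helt : e.val < n := e.isLt
      rcases hadj with h1 | h1
      · -- (u - x).val = 1, so x - u = -(u - x) and (x-u).val = n - 1
        have hxu : x - u = -(u - x) := by abel
        have hval : (x - u).val = n - 1 := by
          rw [hxu]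
          have hsum := Fin.val_add (u - x) (-(u - x))
          rw [add_neg_cancel] at hsum
          rw [Fin.val_zero] at hsum
          have h2 : ((u - x).val + (-(u - x)).val) % n = 0 := hsum.symm
          have h3 : (-(u - x)).val < n := (-(u - x)).isLt
          rw [h1] at h2
          have hdvd := Nat.dvd_of_mod_eq_zero h2
          have := Nat.le_of_dvd (by omega) hdvd
          omega
        have hval2 : (v - u).val = ((e.val + (n - 1)) % n) := by
          rw [hvu, Fin.val_add, hval]
        rcases Nat.eq_zero_or_pos e.val with h0 | h0
        · have : (v - u).val = n - 1 := by
            rw [hval2, h0, Nat.zero_add, Nat.mod_eq_of_lt (by omega)]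
          omega
        · have heq : e.val + (n - 1) = (e.val - 1) + n := by omega
          have : (v - u).val = e.val - 1 := by
            rw [hval2, heq, Nat.add_mod_right, Nat.mod_eq_of_lt (by omega)]
          omega
      · -- (x - u).val = 1
        have hval2 : (v - u).val = ((e.val + 1) % n) := by
          rw [hvu, Fin.val_add, h1]
        rcases eq_or_lt_of_le (Nat.succ_le_of_lt helt) with h0 | h0
        · have hen : e.val + 1 = n := by omega
          have : (v - u).val = 0 := by rw [hval2, hen, Nat.mod_self]
          omega
        · have : (v - u).val = e.val + 1 := by
            rw [hval2, Nat.mod_eq_of_lt (by omega)]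
          omega
    calc min (v - u).val (n - (v - u).val)
        ≤ min (v - x).val (n - (v - x).val) + 1 := key
      _ ≤ p.length + 1 := by omega
      _ = (SimpleGraph.Walk.cons h p).length := by
          simp [SimpleGraph.Walk.length_cons]

/-- Distance bound inside an induced "arc" of the cycle graph. -/
private lemma arc_edist {n : ℕ} (s : Set (Fin n)) :
    ∀ (k : ℕ) (u v : Fin n) (hu : u ∈ s) (hv : v ∈ s), u.val ≤ v.val →
    (∀ w : Fin n, u.val ≤ w.val → w.val ≤ v.val → w ∈ s) → v.val - u.val = k →
    ((cycleGraph n).induce s).edist ⟨u, hu⟩ ⟨v, hv⟩ ≤ (k : ℕ∞) := by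
  intro k
  induction k with
  | zero =>
    intro u v hu hv huv hmid hd
    have : u = v := Fin.ext (by omega)
    subst this
    simp [SimpleGraph.edist_self]
  | succ k ih =>
    intro u v hu hv huv hmid hd
    haveI : NeZero n := ⟨fun h => by subst h; exact u.elim0⟩
    have hlt : u.val < v.val := by omega
    have hn2 : 2 ≤ n := by have := v.isLt; omega
    have hu1 : u.val + 1 < n := by have := v.isLt; omega
    set u' : Fin n := u + 1 with hu'
    have hval : u'.val = u.val + 1 := by
      rw [hu', Fin.val_add]
      have h1 : (1 : Fin n).val = 1 := by
        rw [Fin.val_one']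
        exact Nat.mod_eq_of_lt hn2
      rw [h1, Nat.mod_eq_of_lt hu1]
    have hmem : u' ∈ s := hmid u' (by omega) (by omega)
    have hadj : (cycleGraph n).Adj u u' := by
      rw [cycleGraph_adj']
      right
      have h2 : u' - u = 1 := by rw [hu']; abel
      rw [h2, Fin.val_one']
      exact Nat.mod_eq_of_lt hn2
    have hadj' : ((cycleGraph n).induce s).Adj ⟨u, hu⟩ ⟨u', hmem⟩ := hadj
    have hdist : ((cycleGraph n).induce s).edist ⟨u', hmem⟩ ⟨v, hv⟩ ≤ (k : ℕ∞) :=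
      ih u' v hmem hv (by omega) (fun w h1 h2 => hmid w (by omega) h2) (by omega)
    calc ((cycleGraph n).induce s).edist ⟨u, hu⟩ ⟨v, hv⟩
        ≤ ((cycleGraph n).induce s).edist ⟨u, hu⟩ ⟨u', hmem⟩
          + ((cycleGraph n).induce s).edist ⟨u', hmem⟩ ⟨v, hv⟩ :=
          SimpleGraph.edist_triangle
      _ ≤ 1 + (k : ℕ∞) := by
          gcongr
          calc ((cycleGraph n).induce s).edist ⟨u, hu⟩ ⟨u', hmem⟩
              ≤ (hadj'.toWalk.length : ℕ∞) := SimpleGraph.edist_le _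
            _ = 1 := by simp
      _ = ((k + 1 : ℕ) : ℕ∞) := by
          push_cast
          rw [add_comm]

/-- For even `n ≥ 4`, the discrete Borsuk number of the cycle graph on `n` vertices is `2`. -/
theorem borsukNumber_cycleGraph_even (n : ℕ) (hn : 4 ≤ n) (hev : Even n) :
    borsukNumber (cycleGraph n) = 2 := by
  obtain ⟨m, rfl⟩ := hev
  have hm : 2 ≤ m := by omega
  have hmn : m < m + m := by omega
  set n := m + m with hndef
  haveI : NeZero n := ⟨by omega⟩
  -- Lower bound on the diameter of the cycle graph: ediam ≥ m.
  have hediam : (m : ℕ∞) ≤ (cycleGraph n).ediam := by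
    set v0 : Fin n := ⟨m, hmn⟩ with hv0
    have hdist : (m : ℕ∞) ≤ (cycleGraph n).edist 0 v0 := by
      rw [SimpleGraph.edist_eq_sInf]
      apply le_sInf
      rintro x ⟨w, rfl⟩
      have hw := cycle_walk_length w
      have hsub : (v0 - 0).val = m := by rw [sub_zero]
      rw [hsub] at hw
      show (m : ℕ∞) ≤ (w.length : ℕ∞)
      exact_mod_cast (by omega : m ≤ w.length)
    exact le_trans hdist SimpleGraph.edist_le_ediam
  -- The two parts.
  set A : Finset (Fin n) := Finset.univ.filter (fun x => x.val < m) with hA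
  set B : Finset (Fin n) := Finset.univ.filter (fun x => ¬ x.val < m) with hB
  have h0A : (0 : Fin n) ∈ A := by
    simp [hA]
    omega
  have hmB : (⟨m, hmn⟩ : Fin n) ∈ B := by simp [hB]
  have hAB : A ≠ B := by
    intro h
    rw [h] at h0A
    simp [hB] at h0A
    omega
  have hdisj : Disjoint A B := Finset.disjoint_filter_filter_not _ _ _
  -- Both parts have small diameter.
  have harc : ∀ s : Finset (Fin n), (∀ x ∈ s, ∀ y ∈ s, ∀ w : Fin n,
      x.val ≤ w.val → w.val ≤ y.val → w ∈ s) →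
      (∀ x ∈ s, ∀ y ∈ s, x.val ≤ y.val → y.val - x.val ≤ m - 1) →
      ((cycleGraph n).induce (s : Set (Fin n))).ediam < (cycleGraph n).ediam := by
    intro s hconv hbound
    have hle : ((cycleGraph n).induce (s : Set (Fin n))).ediam ≤ ((m - 1 : ℕ) : ℕ∞) := by
      apply SimpleGraph.ediam_le_of_edist_le
      rintro ⟨x, hx⟩ ⟨y, hy⟩
      rcases le_total x.val y.val with hxy | hxy
      · calc ((cycleGraph n).induce (s : Set (Fin n))).edist ⟨x, hx⟩ ⟨y, hy⟩
            ≤ ((y.val - x.val : ℕ) : ℕ∞) :=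
            arc_edist _ _ x y hx hy hxy (fun w h1 h2 => hconv x hx y hy w h1 h2) rfl
          _ ≤ ((m - 1 : ℕ) : ℕ∞) := by
              exact_mod_cast hbound x hx y hy hxy
      · rw [SimpleGraph.edist_comm]
        calc ((cycleGraph n).induce (s : Set (Fin n))).edist ⟨y, hy⟩ ⟨x, hx⟩
            ≤ ((x.val - y.val : ℕ) : ℕ∞) :=
            arc_edist _ _ y x hy hx hxy (fun w h1 h2 => hconv y hy x hx w h1 h2) rfl
          _ ≤ ((m - 1 : ℕ) : ℕ∞) := by
              exact_mod_cast hbound y hy x hx hxy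
    calc ((cycleGraph n).induce (s : Set (Fin n))).ediam ≤ ((m - 1 : ℕ) : ℕ∞) := hle
      _ < (m : ℕ∞) := by exact_mod_cast (by omega : m - 1 < m)
      _ ≤ (cycleGraph n).ediam := hediam
  -- The partition into two parts.
  have hP : ∃ P : Finpartition (Finset.univ : Finset (Fin n)),
      IsBorsukPartition (cycleGraph n) P ∧ P.parts.card = 2 := by
    refine ⟨⟨{A, B}, ?_, ?_, ?_⟩, ?_, ?_⟩
    · exact (Finset.supIndep_pair hAB).mpr hdisj
    · rw [Finset.sup_insert, Finset.sup_singleton, id, id]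
      exact Finset.filter_union_filter_not_eq _ _
    · intro hbot
      rcases Finset.mem_insert.mp hbot with h | h
      · rw [← h] at h0A; exact absurd h0A (Finset.notMem_empty _)
      · rw [← Finset.mem_singleton.mp h] at hmB
        exact absurd hmB (Finset.notMem_empty _)
    · intro s hs
      rcases Finset.mem_insert.mp hs with h | h
      · subst h
        apply harc
        · intro x hx y hy w h1 h2
          simp only [hA, Finset.mem_filter, Finset.mem_univ, true_and] at hy ⊢
          omega
        · intro x hx y hy hxy
          simp only [hA, Finset.mem_filter, Finset.mem_univ, true_and] at hx hy
          omega
      · rw [Finset.mem_singleton.mp h]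
        apply harc
        · intro x hx y hy w h1 h2
          simp only [hB, Finset.mem_filter, Finset.mem_univ, true_and] at hx ⊢
          omega
        · intro x hx y hy hxy
          simp only [hB, Finset.mem_filter, Finset.mem_univ, true_and] at hx hy
          have := y.isLt
          omega
    · exact Finset.card_pair hAB
  -- Conclude.
  rw [borsukNumber]
  apply le_antisymm
  · exact Nat.sInf_le hP
  · refine le_csInf ⟨2, hP⟩ ?_
    rintro k ⟨P, hPB, rfl⟩
    by_contra hk
    push_neg at hk
    interval_cases h : P.parts.card
    · -- no parts: contradiction with univ nonempty
      have hsup := P.sup_parts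
      rw [Finset.card_eq_zero.mp h] at hsup
      simp only [Finset.sup_empty] at hsup
      have h0 : (0 : Fin n) ∈ (Finset.univ : Finset (Fin n)) := Finset.mem_univ _
      rw [← hsup] at h0
      exact absurd h0 (Finset.notMem_empty _)
    · -- one part: it must be univ, whose induced graph has the same ediam
      obtain ⟨s, hs⟩ := Finset.card_eq_one.mp h
      have hsuniv : s = Finset.univ := by
        have hsup := P.sup_parts
        rwa [hs, Finset.sup_singleton, id] at hsup
      have hmem : s ∈ P.parts := by rw [hs]; exact Finset.mem_singleton_self _
      have hlt := hPB s hmem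
      rw [hsuniv, Finset.coe_univ] at hlt
      have hge : (cycleGraph n).ediam ≤ ((cycleGraph n).induce Set.univ).ediam := by
        apply SimpleGraph.ediam_le_of_edist_le
        intro u v
        have h1 := edist_hom_le
          (⟨fun a => a.val, fun h => h⟩ : (cycleGraph n).induce Set.univ →g cycleGraph n)
          ⟨u, trivial⟩ ⟨v, trivial⟩
        exact le_trans h1 SimpleGraph.edist_le_ediam
      exact absurd hlt (not_lt.mpr hge)
end

section
/- Let n ≥ 3 be odd and let C_n be the cycle graph on n vertices. Then the discrete Borsuk number of C_n equals 3, i.e., b(C_n) = 3. -/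
open SimpleGraph

variable {V : Type*}

namespace BorsukAux

open Fin.NatCast Fin.CommRing

/-- the hom from an induced subgraph to the ambient graph -/
def inducedHom (G : SimpleGraph V) (s : Set V) : G.induce s →g G where
  toFun := Subtype.val
  map_rel' := fun h => h

lemma edist_le_edist_induce (G : SimpleGraph V) (s : Set V) (u v : s) :
    G.edist u.val v.val ≤ (G.induce s).edist u v := by
  rcases eq_or_ne ((G.induce s).edist u v) ⊤ with h | h
  · exact h ▸ le_top
  · obtain ⟨p, hp⟩ := exists_walk_of_edist_ne_top h
    calc G.edist u.val v.val ≤ (p.map (inducedHom G s)).length := edist_le _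
    _ = p.length := by rw [Walk.length_map]
    _ = _ := by exact_mod_cast hp

/-- circular distance function -/
def g (n : ℕ) (a : Fin n) : ℕ := min a.val (n - a.val)

lemma vone {n : ℕ} [NeZero n] (hn : 2 ≤ n) : (1 : Fin n).val = 1 := by
  rw [Fin.val_one']
  exact Nat.mod_eq_of_lt (by omega)

lemma g_add_one {n : ℕ} [NeZero n] (hn : 2 ≤ n) (a : Fin n) :
    g n (a + 1) ≤ g n a + 1 := by
  have hmod : (a + 1).val = (a.val + 1) % n := by
    rw [Fin.add_def, vone hn]
  unfold g
  rcases eq_or_lt_of_le (Nat.succ_le_of_lt a.isLt) with h | h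
  · have h0 : (a + 1).val = 0 := by
      rw [hmod, show a.val + 1 = n from h, Nat.mod_self]
    rw [h0]; omega
  · have h0 : (a + 1).val = a.val + 1 := by rw [hmod, Nat.mod_eq_of_lt h]
    rw [h0]; omega

lemma g_sub_one {n : ℕ} [NeZero n] (hn : 2 ≤ n) (a : Fin n) :
    g n (a - 1) ≤ g n a + 1 := by
  have hsub : (a - 1).val = (n - 1 + a.val) % n := by
    rw [Fin.sub_def, vone hn]
  unfold g
  rcases Nat.eq_zero_or_pos a.val with h | h
  · have h0 : (a - 1).val = n - 1 := by
      rw [hsub, h, Nat.add_zero, Nat.mod_eq_of_lt (by omega)]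
    rw [h0, h]; omega
  · have h0 : (a - 1).val = a.val - 1 := by
      rw [hsub]
      have he : n - 1 + a.val = (a.val - 1) + n := by omega
      rw [he, Nat.add_mod_right, Nat.mod_eq_of_lt (by have := a.isLt; omega)]
    rw [h0]
    have := a.isLt
    omega

lemma g_le_length {n : ℕ} [NeZero n] (hn : 2 ≤ n) {x v : Fin n} (p : (cycleGraph n).Walk x v) :
    g n (v - x) ≤ p.length := by
  induction p with
  | nil =>
    simp [g, sub_self]
  | @cons x y v h q ih =>
    have h1 : (1 : Fin n).val = 1 := vone hn
    rw [cycleGraph_adj'] at h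
    rw [Walk.length_cons]
    rcases h with h | h
    · -- x - y = 1, so y = x - 1, v - x = (v - y) - 1
      have hxy : x - y = 1 := by
        apply Fin.ext; rw [h1]; exact h
      have : v - x = (v - y) - 1 := by
        rw [← hxy]; ring
      rw [this]
      calc g n ((v - y) - 1) ≤ g n (v - y) + 1 := g_sub_one hn _
      _ ≤ q.length + 1 := by omega
    · -- y - x = 1, v - x = (v - y) + 1
      have hxy : y - x = 1 := by
        apply Fin.ext; rw [h1]; exact h
      have : v - x = (v - y) + 1 := by
        rw [← hxy]; ring
      rw [this]
      calc g n ((v - y) + 1) ≤ g n (v - y) + 1 := g_add_one hn _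
      _ ≤ q.length + 1 := by omega

lemma g_le_edist {n : ℕ} [NeZero n] (hn : 2 ≤ n) (x v : Fin n) :
    (g n (v - x) : ℕ∞) ≤ (cycleGraph n).edist x v := by
  rw [edist_eq_sInf]
  apply le_sInf
  rintro b ⟨w, rfl⟩
  show (g n (v - x) : ℕ∞) ≤ (w.length : ℕ∞)
  exact_mod_cast g_le_length hn w

lemma edist_add_cast {n : ℕ} [NeZero n] (hn : 2 ≤ n) (k : ℕ) (u : Fin n) :
    (cycleGraph n).edist u (u + (k : Fin n)) ≤ k := by
  induction k with
  | zero => simp [edist_self]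
  | succ k ih =>
    have h1 : (1 : Fin n).val = 1 := vone hn
    have hadj : ∀ w : Fin n, (cycleGraph n).Adj w (w + 1) := by
      intro w
      rw [cycleGraph_adj']
      right
      rw [add_sub_cancel_left, h1]
    have hcast : ((k + 1 : ℕ) : Fin n) = (k : Fin n) + 1 := by push_cast; ring
    calc (cycleGraph n).edist u (u + ((k + 1 : ℕ) : Fin n))
        ≤ (cycleGraph n).edist u (u + (k : Fin n)) +
          (cycleGraph n).edist (u + (k : Fin n)) (u + ((k+1 : ℕ) : Fin n)) :=
          SimpleGraph.edist_triangle
      _ ≤ k + 1 := by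
          have : (cycleGraph n).edist (u + (k : Fin n)) (u + ((k+1:ℕ) : Fin n)) ≤ 1 := by
            rw [hcast, ← add_assoc]
            exact le_of_eq (edist_eq_one_iff_adj.mpr (hadj _))
          calc _ ≤ (k : ℕ∞) + 1 := add_le_add ih this
          _ = ((k+1 : ℕ) : ℕ∞) := by push_cast; ring

lemma edist_le_g {n : ℕ} [NeZero n] (hn : 2 ≤ n) (u v : Fin n) :
    (cycleGraph n).edist u v ≤ (g n (v - u) : ℕ∞) := by
  have h1 : (cycleGraph n).edist u v ≤ ((v - u).val : ℕ∞) := by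
    have := edist_add_cast hn (v - u).val u
    rwa [Fin.cast_val_eq_self, add_sub_cancel] at this
  have h2 : (cycleGraph n).edist u v ≤ ((u - v).val : ℕ∞) := by
    have := edist_add_cast hn (u - v).val v
    rw [Fin.cast_val_eq_self, add_sub_cancel] at this
    rwa [edist_comm]
  have hval : (u - v).val = (n - (v-u).val) % n := by
    have : u - v = -(v - u) := by ring
    rw [this, Fin.neg_def]
  rcases Nat.eq_zero_or_pos (v - u).val with h | h
  · unfold g; rw [h]
    simpa [h] using h1
  · have : (u - v).val = n - (v - u).val := by
      rw [hval, Nat.mod_eq_of_lt (by have := (v-u).isLt; omega)]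
    unfold g
    rcases Nat.le_total (v - u).val (n - (v - u).val) with hle | hle
    · rw [min_eq_left hle]; exact h1
    · rw [min_eq_right hle, ← this]; exact h2

lemma ediam_cycle_le {n m : ℕ} (hn : 3 ≤ n) (hm : n = 2 * m + 1) :
    (cycleGraph n).ediam ≤ (m : ℕ∞) := by
  haveI : NeZero n := ⟨by omega⟩
  apply ediam_le_of_edist_le
  intro u v
  calc (cycleGraph n).edist u v ≤ (g n (v - u) : ℕ∞) := edist_le_g (by omega) u v
  _ ≤ (m : ℕ∞) := by
      have h := (v - u).isLt
      unfold g
      exact_mod_cast (by omega : min (v-u).val (n - (v-u).val) ≤ m)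

lemma le_ediam_cycle {n m : ℕ} (hn : 3 ≤ n) (hm : n = 2 * m + 1) :
    (m : ℕ∞) ≤ (cycleGraph n).ediam := by
  haveI : NeZero n := ⟨by omega⟩
  have h := g_le_edist (by omega : 2 ≤ n) (0 : Fin n) ((m : Fin n))
  have hval : ((m : Fin n)).val = m := by
    rw [Fin.val_natCast, Nat.mod_eq_of_lt (by omega)]
  have : g n ((m : Fin n) - 0) = m := by
    rw [sub_zero]
    unfold g
    rw [hval]
    omega
  rw [this] at h
  exact h.trans edist_le_ediam

/-- antipodal pair in a big set -/
lemma exists_antipodal {n m : ℕ} [NeZero n] (hn : 3 ≤ n) (hm : n = 2 * m + 1)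
    (s : Finset (Fin n)) (hs : m + 1 ≤ s.card) :
    ∃ u ∈ s, u + (m : Fin n) ∈ s := by
  by_contra hc
  push_neg at hc
  have hdisj : Disjoint s (s.image (· + (m : Fin n))) := by
    rw [Finset.disjoint_right]
    intro x hx hxs
    obtain ⟨u, hu, rfl⟩ := Finset.mem_image.mp hx
    exact hc u hu hxs
  have hcard : (s ∪ s.image (· + (m : Fin n))).card ≤ Fintype.card (Fin n) :=
    Finset.card_le_card (Finset.subset_univ _) |>.trans (by simp)
  rw [Finset.card_union_of_disjoint hdisj, Finset.card_image_of_injective _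
    (add_left_injective _), Fintype.card_fin] at hcard
  omega

/-- the edist within an induced arc -/
lemma arc_edist {n : ℕ} (hn : 3 ≤ n) (s : Set (Fin n)) (k : ℕ) :
    ∀ (u v : Fin n) (hu : u ∈ s) (hv : v ∈ s), v.val = u.val + k →
    (∀ w : Fin n, u.val ≤ w.val → w.val ≤ v.val → w ∈ s) →
    ((cycleGraph n).induce s).edist ⟨u, hu⟩ ⟨v, hv⟩ ≤ (k : ℕ∞) := by
  haveI : NeZero n := ⟨by omega⟩
  induction k with
  | zero =>
    intro u v hu hv hk _
    have : u = v := Fin.ext (by omega)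
    subst this
    simp [edist_self]
  | succ k ih =>
    intro u v hu hv hk hmid
    have hub : u.val + 1 < n := by have := v.isLt; omega
    have hu' : (⟨u.val + 1, hub⟩ : Fin n) ∈ s :=
      hmid ⟨u.val + 1, hub⟩ (by show u.val ≤ u.val + 1; omega) (by show u.val + 1 ≤ v.val; omega)
    have hadj : ((cycleGraph n).induce s).Adj ⟨u, hu⟩ ⟨⟨u.val + 1, hub⟩, hu'⟩ := by
      show (cycleGraph n).Adj u ⟨u.val + 1, hub⟩
      rw [cycleGraph_adj']
      right
      rw [Fin.sub_def]
      show (n - u.val + (u.val + 1)) % n = 1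
      rw [show n - u.val + (u.val + 1) = 1 + n by omega, Nat.add_mod_right,
        Nat.mod_eq_of_lt (by omega)]
    have hrest : ((cycleGraph n).induce s).edist ⟨⟨u.val + 1, hub⟩, hu'⟩ ⟨v, hv⟩ ≤ (k : ℕ∞) := by
      apply ih ⟨u.val + 1, hub⟩ v hu' hv (by show v.val = u.val + 1 + k; omega)
      intro w hw1 hw2
      have hv1 : ((⟨u.val + 1, hub⟩ : Fin n)).val = u.val + 1 := rfl
      exact hmid w (by omega) hw2
    calc ((cycleGraph n).induce s).edist ⟨u, hu⟩ ⟨v, hv⟩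
        ≤ ((cycleGraph n).induce s).edist ⟨u, hu⟩ ⟨⟨u.val + 1, hub⟩, hu'⟩ +
          ((cycleGraph n).induce s).edist ⟨⟨u.val + 1, hub⟩, hu'⟩ ⟨v, hv⟩ :=
          SimpleGraph.edist_triangle
      _ ≤ 1 + (k : ℕ∞) := add_le_add (le_of_eq (edist_eq_one_iff_adj.mpr hadj)) hrest
      _ = ((k + 1 : ℕ) : ℕ∞) := by push_cast; ring

lemma arc_ediam {n : ℕ} (hn : 3 ≤ n) (s : Finset (Fin n)) (a b k : ℕ)
    (hs : ∀ x : Fin n, x ∈ s ↔ a ≤ x.val ∧ x.val < b) (hw : b ≤ a + k) (hk : 1 ≤ k) :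
    ((cycleGraph n).induce (s : Set (Fin n))).ediam ≤ ((k - 1 : ℕ) : ℕ∞) := by
  apply ediam_le_of_edist_le
  rintro ⟨u, hu⟩ ⟨v, hv⟩
  rw [Finset.mem_coe] at hu hv
  have hau := (hs u).mp hu
  have hav := (hs v).mp hv
  rcases Nat.le_total u.val v.val with hle | hle
  · have := arc_edist hn (s : Set (Fin n)) (v.val - u.val) u v hu hv (by omega)
      (fun w h1 h2 => Finset.mem_coe.mpr ((hs w).mpr ⟨by omega, by omega⟩))
    refine this.trans ?_
    exact_mod_cast (by omega : v.val - u.val ≤ k - 1)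
  · rw [edist_comm]
    have := arc_edist hn (s : Set (Fin n)) (u.val - v.val) v u hv hu (by omega)
      (fun w h1 h2 => Finset.mem_coe.mpr ((hs w).mpr ⟨by omega, by omega⟩))
    refine this.trans ?_
    exact_mod_cast (by omega : u.val - v.val ≤ k - 1)

end BorsukAux


open BorsukAux Fin.NatCast Fin.CommRing in
/-- For odd `n ≥ 3`, the discrete Borsuk number of the cycle graph on `n` vertices is `3`. -/
theorem borsukNumber_cycleGraph_odd (n : ℕ) (hn : 3 ≤ n) (hodd : Odd n) :
    borsukNumber (cycleGraph n) = 3 := by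
  obtain ⟨m, hm⟩ := hodd
  have hm1 : 1 ≤ m := by omega
  haveI : NeZero n := ⟨by omega⟩
  have hediam_ge : (m : ℕ∞) ≤ (cycleGraph n).ediam := le_ediam_cycle hn hm
  have hediam_le : (cycleGraph n).ediam ≤ (m : ℕ∞) := ediam_cycle_le hn hm
  -- the three arcs
  set A : Finset (Fin n) := Finset.univ.filter (fun x => x.val < m) with hA
  set B : Finset (Fin n) := Finset.univ.filter (fun x => m ≤ x.val ∧ x.val < 2*m) with hB
  set C : Finset (Fin n) := Finset.univ.filter (fun x => 2*m ≤ x.val) with hC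
  have hAmem : ∀ x : Fin n, x ∈ A ↔ 0 ≤ x.val ∧ x.val < m := by
    intro x; simp [hA]
  have hBmem : ∀ x : Fin n, x ∈ B ↔ m ≤ x.val ∧ x.val < 2*m := by
    intro x; simp [hB]
  have hCmem : ∀ x : Fin n, x ∈ C ↔ 2*m ≤ x.val ∧ x.val < 2*m+1 := by
    intro x
    have := x.isLt
    simp [hC]
    omega
  have h0A : (⟨0, by omega⟩ : Fin n) ∈ A := (hAmem _).mpr (by simp only [Fin.val_mk]; omega)
  have hmB : (⟨m, by omega⟩ : Fin n) ∈ B := (hBmem _).mpr (by simp only [Fin.val_mk]; omega)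
  have h2mC : (⟨2*m, by omega⟩ : Fin n) ∈ C := (hCmem _).mpr (by simp only [Fin.val_mk]; omega)
  have hAB : A ≠ B := fun h => by
    have := (hBmem ⟨0, by omega⟩).mp (h ▸ h0A); simp only [Fin.val_mk] at this; omega
  have hAC : A ≠ C := fun h => by
    have := (hCmem ⟨0, by omega⟩).mp (h ▸ h0A); simp only [Fin.val_mk] at this; omega
  have hBC : B ≠ C := fun h => by
    have := (hCmem ⟨m, by omega⟩).mp (h ▸ hmB); simp only [Fin.val_mk] at this; omega
  have hdisjAB : Disjoint A B := by
    rw [Finset.disjoint_left]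
    intro x hx hx'
    have := (hAmem x).mp hx; have := (hBmem x).mp hx'; omega
  have hdisjAC : Disjoint A C := by
    rw [Finset.disjoint_left]
    intro x hx hx'
    have := (hAmem x).mp hx; have := (hCmem x).mp hx'; omega
  have hdisjBC : Disjoint B C := by
    rw [Finset.disjoint_left]
    intro x hx hx'
    have := (hBmem x).mp hx; have := (hCmem x).mp hx'; omega
  have hP : ∃ P : Finpartition (Finset.univ : Finset (Fin n)),
      IsBorsukPartition (cycleGraph n) P ∧ P.parts.card = 3 := by
    refine ⟨⟨{A, B, C}, ?_, ?_, ?_⟩, ?_, ?_⟩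
    · rw [Finset.supIndep_iff_pairwiseDisjoint]
      intro x hx y hy hxy
      simp only [Finset.coe_insert, Set.mem_insert_iff, Finset.coe_singleton,
        Set.mem_singleton_iff] at hx hy
      rcases hx with rfl | rfl | rfl <;> rcases hy with rfl | rfl | rfl <;>
        first
          | exact absurd rfl hxy
          | assumption
          | (first | exact hdisjAB.symm | exact hdisjAC.symm | exact hdisjBC.symm)
    · rw [Finset.sup_insert, Finset.sup_insert, Finset.sup_singleton]
      apply Finset.eq_univ_iff_forall.mpr
      intro x
      have hx := x.isLt
      simp only [id_eq, Finset.sup_eq_union, Finset.mem_union]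
      rw [hAmem x, hBmem x, hCmem x]
      omega
    · intro h
      simp only [Finset.mem_insert, Finset.mem_singleton] at h
      rcases h with h | h | h
      · exact absurd (h ▸ h0A) (Finset.notMem_empty _)
      · exact absurd (h ▸ hmB) (Finset.notMem_empty _)
      · exact absurd (h ▸ h2mC) (Finset.notMem_empty _)
    · intro s hs
      simp only [Finset.mem_insert, Finset.mem_singleton] at hs
      have harc : ((cycleGraph n).induce (s : Set (Fin n))).ediam ≤ ((m - 1 : ℕ) : ℕ∞) := by
        rcases hs with rfl | rfl | rfl
        · exact arc_ediam hn _ 0 m m hAmem (by omega) hm1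
        · exact arc_ediam hn _ m (2*m) m hBmem (by omega) hm1
        · calc ((cycleGraph n).induce (C : Set (Fin n))).ediam
              ≤ ((1 - 1 : ℕ) : ℕ∞) := arc_ediam hn _ (2*m) (2*m+1) 1 hCmem (by omega) le_rfl
            _ ≤ _ := by exact_mod_cast Nat.zero_le _
      apply lt_of_le_of_lt harc
      apply lt_of_lt_of_le _ hediam_ge
      exact_mod_cast (by omega : m - 1 < m)
    · rw [Finset.card_insert_of_notMem (by simp [hAB, hAC]),
        Finset.card_insert_of_notMem (by simp [hBC]), Finset.card_singleton]
  -- lower bound: every Borsuk partition has ≥ 3 parts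
  have hlow : ∀ k ∈ {k | ∃ P : Finpartition (Finset.univ : Finset (Fin n)),
      IsBorsukPartition (cycleGraph n) P ∧ P.parts.card = k}, 3 ≤ k := by
    rintro k ⟨P, hPB, rfl⟩
    by_contra hk
    push_neg at hk
    -- some part has card ≥ m + 1
    have hsum : ∑ s ∈ P.parts, s.card = n := by
      rw [P.sum_card_parts, Finset.card_univ, Fintype.card_fin]
    have hbig : ∃ s ∈ P.parts, m + 1 ≤ s.card := by
      by_contra hc
      push_neg at hc
      have h1 : ∑ s ∈ P.parts, s.card ≤ P.parts.card * m := by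
        have := Finset.sum_le_card_nsmul P.parts (fun s => s.card) m
          (fun s hs => by show s.card ≤ m; have := hc s hs; omega)
        simpa [smul_eq_mul] using this
      have h2 : P.parts.card * m ≤ 2 * m := Nat.mul_le_mul_right m (by omega)
      omega
    obtain ⟨s, hsP, hcard⟩ := hbig
    obtain ⟨u, hu, hum⟩ := exists_antipodal hn hm s hcard
    -- edist in induced graph ≥ m
    have hdist : (m : ℕ∞) ≤ ((cycleGraph n).induce (s : Set (Fin n))).edist
        ⟨u, Finset.mem_coe.mpr hu⟩ ⟨u + (m : Fin n), Finset.mem_coe.mpr hum⟩ := by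
      refine le_trans ?_ (edist_le_edist_induce _ _ _ _)
      have := g_le_edist (by omega : 2 ≤ n) u (u + (m : Fin n))
      have hval : ((m : Fin n)).val = m := by
        rw [Fin.val_natCast, Nat.mod_eq_of_lt (by omega)]
      have hg : g n ((u + (m : Fin n)) - u) = m := by
        rw [add_sub_cancel_left]
        unfold BorsukAux.g
        rw [hval]
        omega
      rw [hg] at this
      exact this
    have := hPB s hsP
    have : ((cycleGraph n).induce (s : Set (Fin n))).ediam < (m : ℕ∞) :=
      lt_of_lt_of_le this hediam_le
    exact absurd (hdist.trans edist_le_ediam) (not_le.mpr this)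
  rw [borsukNumber]
  exact IsLeast.csInf_eq ⟨hP, hlow⟩
end

section
/- Let G be a finite connected simple graph with at least one vertex that is not complete, and let C_G be the cone of G, i.e., the graph obtained from G by adding one new vertex adjacent to all vertices of G. Then diam(C_G) = 2, θ(C_G) = θ(G), and consequently b(C_G) = θ(G), i.e., the discrete Borsuk number of the cone of G equals the clique cover number of G. -/
open SimpleGraph

variable {V : Type*}

/-- The *clique cover number* of a finite simple graph `G`: the minimum number of parts of a
partition of the vertex set of `G` into cliques. -/
noncomputable def cliqueCoverNumber [Fintype V] [DecidableEq V] (G : SimpleGraph V) : ℕ :=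
  sInf {n | ∃ P : Finpartition (Finset.univ : Finset V),
    (∀ s ∈ P.parts, G.IsClique (s : Set V)) ∧ P.parts.card = n}

/-- The *cone* of a graph `G`: a new vertex (`none`) is added and joined to every vertex of `G`. -/
def coneGraph (G : SimpleGraph V) : SimpleGraph (Option V) where
  Adj x y :=
    match x, y with
    | some u, some v => G.Adj u v
    | some _, none => True
    | none, some _ => True
    | none, none => False
  symm := by
    refine ⟨?_⟩
    intro x y h
    match x, y with
    | some u, some v => exact G.adj_symm h
    | some _, none => trivial
    | none, some _ => trivial
  loopless := by
    refine ⟨?_⟩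
    intro x
    match x with
    | some u => exact G.irrefl
    | none => exact fun h => h

section Aux

variable {W : Type*}

lemma aux_clique_iff_ediam_le_one (H : SimpleGraph W) (s : Set W) :
    (H.induce s).ediam ≤ 1 ↔ H.IsClique s := by
  constructor
  · intro h u hu v hv hne
    have hle : (H.induce s).edist ⟨u, hu⟩ ⟨v, hv⟩ ≤ 1 := le_trans edist_le_ediam h
    have hne' : (⟨u, hu⟩ : s) ≠ ⟨v, hv⟩ := fun e => hne (congrArg Subtype.val e)
    have h0 : (H.induce s).edist ⟨u, hu⟩ ⟨v, hv⟩ ≠ 0 := by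
      exact fun h0 => hne' (edist_eq_zero_iff.mp h0)
    have h1 : (H.induce s).edist ⟨u, hu⟩ ⟨v, hv⟩ = 1 := le_antisymm hle
      (ENat.one_le_iff_ne_zero.mpr h0)
    have := edist_eq_one_iff_adj.mp h1
    simpa using this
  · intro h
    apply ediam_le_of_edist_le
    rintro ⟨u, hu⟩ ⟨v, hv⟩
    by_cases he : u = v
    · subst he
      simp [edist_eq_zero_iff.mpr rfl]
    · have : (H.induce s).Adj ⟨u, hu⟩ ⟨v, hv⟩ := by simpa using h hu hv he
      exact le_of_eq (edist_eq_one_iff_adj.mpr this)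

end Aux

lemma aux_cone_adj_some {G : SimpleGraph V} {a b : V} :
    (coneGraph G).Adj (some a) (some b) ↔ G.Adj a b := Iff.rfl

lemma aux_cone_adj_none_left {G : SimpleGraph V} {a : V} :
    (coneGraph G).Adj none (some a) := trivial

lemma aux_cone_adj_none_right {G : SimpleGraph V} {a : V} :
    (coneGraph G).Adj (some a) none := trivial

lemma aux_coneGraph_ediam (G : SimpleGraph V)
    (hnc : ∃ u v : V, u ≠ v ∧ ¬ G.Adj u v) : (coneGraph G).ediam = 2 := by
  obtain ⟨u, v, huv, hadj⟩ := hnc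
  apply le_antisymm
  · apply ediam_le_of_edist_le
    intro x y
    have hx : (coneGraph G).edist x none ≤ 1 := by
      cases x with
      | none => simp [edist_eq_zero_iff.mpr rfl]
      | some a => exact le_of_eq (edist_eq_one_iff_adj.mpr aux_cone_adj_none_right)
    have hy : (coneGraph G).edist none y ≤ 1 := by
      cases y with
      | none => simp [edist_eq_zero_iff.mpr rfl]
      | some a => exact le_of_eq (edist_eq_one_iff_adj.mpr aux_cone_adj_none_left)
    calc (coneGraph G).edist x y ≤ (coneGraph G).edist x none + (coneGraph G).edist none y :=
          SimpleGraph.edist_triangle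
      _ ≤ 1 + 1 := add_le_add hx hy
      _ = 2 := one_add_one_eq_two
  · have h0 : (coneGraph G).edist (some u) (some v) ≠ 0 := fun h =>
      huv (Option.some_injective V (edist_eq_zero_iff.mp h))
    have h1 : (coneGraph G).edist (some u) (some v) ≠ 1 := fun h =>
      hadj (aux_cone_adj_some.mp (edist_eq_one_iff_adj.mp h))
    have hge : (2 : ℕ∞) ≤ (coneGraph G).edist (some u) (some v) := by
      have hone : (1 : ℕ∞) ≤ (coneGraph G).edist (some u) (some v) :=
        ENat.one_le_iff_ne_zero.mpr h0
      have : (1 : ℕ∞) < (coneGraph G).edist (some u) (some v) :=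
        lt_of_le_of_ne hone (Ne.symm h1)
      have := (ENat.add_one_le_iff (by simp)).mpr this
      simpa [one_add_one_eq_two] using this
    exact hge.trans edist_le_ediam

lemma aux_base_to_cone [Fintype V] [DecidableEq V] [Nonempty V] (G : SimpleGraph V)
    {n : ℕ} (hn : ∃ P : Finpartition (Finset.univ : Finset V),
      (∀ s ∈ P.parts, G.IsClique (s : Set V)) ∧ P.parts.card = n) :
    ∃ Q : Finpartition (Finset.univ : Finset (Option V)),
      (∀ s ∈ Q.parts, (coneGraph G).IsClique (s : Set (Option V))) ∧ Q.parts.card = n := by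
  classical
  obtain ⟨P, hcl, hcard⟩ := hn
  obtain ⟨v₀⟩ := ‹Nonempty V›
  set s₀ := P.part v₀ with hs₀
  have hs₀mem : s₀ ∈ P.parts := P.part_mem.mpr (Finset.mem_univ v₀)
  set m : Finset V → Finset (Option V) := fun s =>
    if s = s₀ then insert none (s.image some) else s.image some with hm
  have hsome : ∀ s (v : V), some v ∈ m s ↔ v ∈ s := by
    intro s v
    by_cases h : s = s₀ <;> simp [hm, h]
  have hnone : ∀ s, none ∈ m s ↔ s = s₀ := by
    intro s
    by_cases h : s = s₀ <;> simp [hm, h]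
  have hinj : Set.InjOn m P.parts := by
    intro a _ b _ hab
    ext w
    rw [← hsome a w, ← hsome b w, hab]
  refine ⟨⟨P.parts.image m, ?_, ?_, ?_⟩, ?_, ?_⟩
  · rw [Finset.supIndep_iff_pairwiseDisjoint]
    intro t₁ ht₁ t₂ ht₂ hne
    obtain ⟨a, ha, rfl⟩ := Finset.mem_image.mp (Finset.mem_coe.mp ht₁)
    obtain ⟨b, hb, rfl⟩ := Finset.mem_image.mp (Finset.mem_coe.mp ht₂)
    have hab : a ≠ b := fun h => hne (by rw [h])
    have hd : Disjoint a b := P.disjoint (Finset.mem_coe.mpr ha) (Finset.mem_coe.mpr hb) hab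
    show Disjoint (m a) (m b)
    rw [Finset.disjoint_left]
    intro x hxa hxb
    cases x with
    | none =>
      have h1 := (hnone a).mp hxa
      have h2 := (hnone b).mp hxb
      exact hab (h1.trans h2.symm)
    | some w =>
      exact Finset.disjoint_left.mp hd ((hsome a w).mp hxa) ((hsome b w).mp hxb)
  · refine Finset.eq_univ_iff_forall.mpr fun x => ?_
    rw [Finset.mem_sup]
    cases x with
    | none =>
      exact ⟨m s₀, Finset.mem_image_of_mem m hs₀mem, (hnone s₀).mpr rfl⟩
    | some w =>
      refine ⟨m (P.part w), Finset.mem_image_of_mem m (P.part_mem.mpr (Finset.mem_univ w)), ?_⟩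
      exact (hsome _ w).mpr (P.mem_part (Finset.mem_univ w))
  · intro hbot
    obtain ⟨s, hs, hms⟩ := Finset.mem_image.mp hbot
    obtain ⟨w, hw⟩ := P.nonempty_of_mem_parts hs
    have : some w ∈ m s := (hsome s w).mpr hw
    rw [hms] at this
    exact absurd this (Finset.notMem_empty _)
  · intro t ht
    obtain ⟨s, hs, rfl⟩ := Finset.mem_image.mp ht
    intro x hx y hy hxy
    cases x with
    | none =>
      cases y with
      | none => exact absurd rfl hxy
      | some b => exact aux_cone_adj_none_left
    | some a =>
      cases y with
      | none => exact aux_cone_adj_none_right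
      | some b =>
        have ha : a ∈ s := (hsome s a).mp (Finset.mem_coe.mp hx)
        have hb : b ∈ s := (hsome s b).mp (Finset.mem_coe.mp hy)
        have hne : a ≠ b := fun h => hxy (congrArg some h)
        exact aux_cone_adj_some.mpr (hcl s hs ha hb hne)
  · rw [Finset.card_image_of_injOn hinj, hcard]

lemma aux_cone_to_base [Fintype V] [DecidableEq V] (G : SimpleGraph V)
    {n : ℕ} (hn : ∃ Q : Finpartition (Finset.univ : Finset (Option V)),
      (∀ s ∈ Q.parts, (coneGraph G).IsClique (s : Set (Option V))) ∧ Q.parts.card = n) :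
    ∃ m ≤ n, ∃ P : Finpartition (Finset.univ : Finset V),
      (∀ s ∈ P.parts, G.IsClique (s : Set V)) ∧ P.parts.card = m := by
  classical
  obtain ⟨Q, hcl, hcard⟩ := hn
  have finj : ∀ (a a' : Option V) (b : V), b ∈ id a → b ∈ id a' → a = a' := by
    intro a a' b hb hb'
    cases a <;> cases a' <;> simp_all [Option.mem_def]
  set f : Finset (Option V) → Finset V := fun t => t.filterMap id finj with hf
  have hmemf : ∀ (t : Finset (Option V)) (v : V), v ∈ f t ↔ some v ∈ t := by
    intro t v
    simp [hf, Finset.mem_filterMap, Option.mem_def]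
  set parts := (Q.parts.image f).erase ∅ with hparts
  refine ⟨parts.card, ?_, ⟨parts, ?_, ?_, ?_⟩, ?_, rfl⟩
  · calc parts.card ≤ (Q.parts.image f).card :=
          Finset.card_le_card (Finset.erase_subset _ _)
      _ ≤ Q.parts.card := Finset.card_image_le
      _ = n := hcard
  · rw [Finset.supIndep_iff_pairwiseDisjoint]
    intro t₁ ht₁ t₂ ht₂ hne
    obtain ⟨-, ht₁'⟩ := Finset.mem_erase.mp (Finset.mem_coe.mp ht₁)
    obtain ⟨-, ht₂'⟩ := Finset.mem_erase.mp (Finset.mem_coe.mp ht₂)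
    obtain ⟨a, ha, rfl⟩ := Finset.mem_image.mp ht₁'
    obtain ⟨b, hb, rfl⟩ := Finset.mem_image.mp ht₂'
    have hab : a ≠ b := fun h => hne (by rw [h])
    have hd : Disjoint a b := Q.disjoint (Finset.mem_coe.mpr ha) (Finset.mem_coe.mpr hb) hab
    show Disjoint (f a) (f b)
    rw [Finset.disjoint_left]
    intro x hxa hxb
    exact Finset.disjoint_left.mp hd ((hmemf a x).mp hxa) ((hmemf b x).mp hxb)
  · refine Finset.eq_univ_iff_forall.mpr fun v => ?_
    rw [Finset.mem_sup]
    obtain ⟨t, ht, hvt⟩ := Q.exists_mem (Finset.mem_univ (some v))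
    have hv : v ∈ f t := (hmemf t v).mpr hvt
    refine ⟨f t, Finset.mem_erase.mpr ⟨Finset.ne_empty_of_mem hv,
      Finset.mem_image_of_mem f ht⟩, hv⟩
  · exact Finset.notMem_erase _ _
  · intro t ht
    obtain ⟨-, ht'⟩ := Finset.mem_erase.mp ht
    obtain ⟨s, hs, rfl⟩ := Finset.mem_image.mp ht'
    intro a ha b hb hab
    have ha' : some a ∈ s := (hmemf s a).mp (Finset.mem_coe.mp ha)
    have hb' : some b ∈ s := (hmemf s b).mp (Finset.mem_coe.mp hb)
    exact aux_cone_adj_some.mp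
      (hcl s hs ha' hb' (fun h => hab (Option.some_injective _ h)))

lemma aux_clique_set_nonempty (W : Type*) [Fintype W] [DecidableEq W] (H : SimpleGraph W) :
    {n | ∃ P : Finpartition (Finset.univ : Finset W),
      (∀ s ∈ P.parts, H.IsClique (s : Set W)) ∧ P.parts.card = n}.Nonempty := by
  refine ⟨_, ⊥, fun t ht => ?_, rfl⟩
  obtain ⟨a, -, rfl⟩ := Finpartition.mem_bot_iff.mp ht
  simpa using H.isClique_singleton a

/-- If `G` is a finite connected non-complete graph (with at least one vertex), then its cone
`C_G` has diameter `2`, the clique cover number of `C_G` equals that of `G`, and consequently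
the discrete Borsuk number of `C_G` equals the clique cover number of `G`. -/
theorem borsukNumber_coneGraph [Fintype V] [DecidableEq V] [Nonempty V] (G : SimpleGraph V)
    (hconn : G.Connected) (hnc : ∃ u v : V, u ≠ v ∧ ¬ G.Adj u v) :
    (coneGraph G).ediam = 2 ∧
      cliqueCoverNumber (coneGraph G) = cliqueCoverNumber G ∧
      borsukNumber (coneGraph G) = cliqueCoverNumber G := by
  classical
  have h2 : (coneGraph G).ediam = 2 := aux_coneGraph_ediam G hnc
  have hGset := aux_clique_set_nonempty V G
  have hCset := aux_clique_set_nonempty (Option V) (coneGraph G)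
  have key1 : cliqueCoverNumber (coneGraph G) = cliqueCoverNumber G := by
    apply le_antisymm
    · have hmem := Nat.sInf_mem hGset
      exact Nat.sInf_le (aux_base_to_cone G hmem)
    · have hmem := Nat.sInf_mem hCset
      obtain ⟨m, hm, P, hP, hPc⟩ := aux_cone_to_base G hmem
      exact le_trans (Nat.sInf_le ⟨P, hP, hPc⟩) hm
  have hiff : ∀ P : Finpartition (Finset.univ : Finset (Option V)),
      IsBorsukPartition (coneGraph G) P ↔
        ∀ s ∈ P.parts, (coneGraph G).IsClique (s : Set (Option V)) := by
    intro P
    unfold IsBorsukPartition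
    refine forall₂_congr fun s hs => ?_
    rw [h2, show (2 : ℕ∞) = 1 + 1 from one_add_one_eq_two.symm,
      ENat.lt_add_one_iff (by simp)]
    exact aux_clique_iff_ediam_le_one _ _
  have key2 : borsukNumber (coneGraph G) = cliqueCoverNumber (coneGraph G) := by
    unfold borsukNumber cliqueCoverNumber
    congr 1
    ext n
    simp only [Set.mem_setOf_eq]
    constructor
    · rintro ⟨P, hP, hc⟩
      exact ⟨P, (hiff P).mp hP, hc⟩
    · rintro ⟨P, hP, hc⟩
      exact ⟨P, (hiff P).mpr hP, hc⟩
  exact ⟨h2, key1, key2.trans key1⟩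
end

section
/- Let T be a finite tree (a finite connected acyclic simple graph) with at least two vertices whose center consists of exactly two vertices (equivalently, exactly two vertices attain the minimum eccentricity). Then the discrete Borsuk number of T equals 2, i.e., b(T) = 2. -/
open SimpleGraph

variable {V : Type*}

/-- The eccentricity of a vertex: the supremum of extended distances to all vertices. -/
noncomputable def graphEccent (G : SimpleGraph V) (v : V) : ℕ∞ :=
  ⨆ u, G.edist v u

/-- The center of a graph: the set of vertices of minimum eccentricity. -/
def graphCenter (G : SimpleGraph V) : Set V :=
  {v | ∀ u, graphEccent G v ≤ graphEccent G u}

section TreeHelpers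

open Walk

variable [DecidableEq V] {T : SimpleGraph V}

lemma dist_add_dist_of_mem (hT : T.Connected) {u v x : V} (p : T.Walk u v)
    (hl : p.length = T.dist u v) (hx : x ∈ p.support) :
    T.dist u x + T.dist x v = T.dist u v := by
  refine le_antisymm ?_ hT.dist_triangle
  calc T.dist u x + T.dist x v ≤ (p.takeUntil x hx).length + (p.dropUntil x hx).length :=
        Nat.add_le_add (dist_le _) (dist_le _)
    _ = p.length := by rw [← length_append, take_spec]
    _ = _ := hl

lemma tree_side_dichotomy (hT : T.IsTree) {a b : V} (hab : T.Adj a b) (v : V) :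
    T.dist v a + 1 = T.dist v b ∨ T.dist v b + 1 = T.dist v a := by
  obtain ⟨p1, hp1, hl1⟩ := hT.isConnected.exists_path_of_dist v a
  by_cases hb : b ∈ p1.support
  · right
    have h1 := dist_add_dist_of_mem hT.isConnected p1 hl1 hb
    have h2 : T.dist b a = 1 := dist_eq_one_iff_adj.mpr hab.symm
    omega
  · left
    obtain ⟨p2, hp2, hl2⟩ := hT.isConnected.exists_path_of_dist v b
    have hq : (p1.concat hab).IsPath := by
      rw [isPath_def, support_concat]
      exact List.Nodup.append hp1.support_nodup (List.nodup_singleton b)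
        (by simpa using hb)
    have heq : p1.concat hab = p2 := (hT.existsUnique_path v b).unique hq hp2
    have hlen : (p1.concat hab).length = p2.length := by rw [heq]
    rw [length_concat] at hlen
    omega

/-- `v` is on the `a`-side of the tree edge `a ~ b`. -/
def TSide (T : SimpleGraph V) (a b v : V) : Prop := T.dist v b = T.dist v a + 1

lemma tside_or (hT : T.IsTree) {a b : V} (hab : T.Adj a b) (v : V) :
    TSide T a b v ∨ TSide T b a v := by
  rcases tree_side_dichotomy hT hab v with h | h
  · exact Or.inl h.symm
  · exact Or.inr h.symm

lemma not_tside_both {a b v : V} (h1 : TSide T a b v) (h2 : TSide T b a v) : False := by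
  unfold TSide at h1 h2; omega

lemma tside_self (hab : T.Adj a b) : TSide T a b a := by
  unfold TSide
  simp [SimpleGraph.dist_self, dist_eq_one_iff_adj.mpr hab]

lemma tside_of_mem_shortest (hT : T.IsTree) {a b v x : V} (hab : T.Adj a b)
    (hv : TSide T a b v)
    (p : T.Walk v a) (hl : p.length = T.dist v a) (hx : x ∈ p.support) :
    TSide T a b x := by
  have h1 := dist_add_dist_of_mem hT.isConnected p hl hx
  have h2 : T.dist v b ≤ T.dist v x + T.dist x b := hT.isConnected.dist_triangle
  rcases tside_or hT hab x with h | h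
  · exact h
  · unfold TSide at hv h ⊢; omega

lemma exists_path_in_side (hT : T.IsTree) {a b v : V} (hab : T.Adj a b) (hv : TSide T a b v) :
    ∃ p : T.Walk v a, p.IsPath ∧ p.length = T.dist v a ∧ ∀ x ∈ p.support, TSide T a b x := by
  obtain ⟨p, hp, hl⟩ := hT.isConnected.exists_path_of_dist v a
  exact ⟨p, hp, hl, fun x hx => tside_of_mem_shortest hT hab hv p hl hx⟩

lemma crossing_edge (hT : T.IsTree) {a b x y : V} (hab : T.Adj a b) (hxy : T.Adj x y)
    (hx : TSide T a b x) (hy : TSide T b a y) : x = a ∧ y = b := by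
  obtain ⟨p1, hp1, hl1, hs1⟩ := exists_path_in_side hT hab hx
  obtain ⟨p2, hp2, hl2, hs2⟩ := exists_path_in_side hT hab.symm hy
  let q : T.Walk a b := p1.reverse.append (Walk.cons hxy p2)
  have hq : q.IsPath := by
    rw [isPath_def]
    show (p1.reverse.append (Walk.cons hxy p2)).support.Nodup
    rw [support_append, support_cons]
    simp only [List.tail_cons]
    refine List.Nodup.append hp1.reverse.support_nodup hp2.support_nodup ?_
    intro z hz1 hz2
    rw [support_reverse, List.mem_reverse] at hz1
    exact not_tside_both (hs1 z hz1) (hs2 z hz2)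
  have he : (Walk.cons hab Walk.nil : T.Walk a b).IsPath := by
    simp [isPath_def, hab.ne]
  have heq : q = Walk.cons hab Walk.nil := (hT.existsUnique_path a b).unique hq he
  have hlen : q.length = 1 := by rw [heq]; simp
  have hlen2 : q.length = p1.length + (p2.length + 1) := by
    show (p1.reverse.append (Walk.cons hxy p2)).length = _
    rw [length_append, length_reverse, length_cons]
  have h1 : p1.length = 0 := by omega
  have h2 : p2.length = 0 := by omega
  exact ⟨eq_of_length_eq_zero h1, eq_of_length_eq_zero h2⟩

lemma cross_walk_length (hT : T.IsTree) {a b : V} (hab : T.Adj a b) :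
    ∀ {x y : V} (p : T.Walk x y), TSide T a b x → TSide T b a y →
      T.dist x a + 1 + T.dist y b ≤ p.length := by
  intro x y p
  induction p with
  | nil => intro hx hy; exact (not_tside_both hx hy).elim
  | @cons u w y' h q ih =>
    intro hx hy
    rcases tside_or hT hab w with hz | hz
    · have h1 := ih hz hy
      have h2 : T.dist u a ≤ T.dist u w + T.dist w a := hT.isConnected.dist_triangle
      have h3 : T.dist u w ≤ 1 := by
        have := dist_le (Walk.cons h (Walk.nil : T.Walk w w))
        simpa using this
      rw [length_cons]
      omega
    · obtain ⟨h4, h5⟩ := crossing_edge hT hab h hx hz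
      have h6 : T.dist u a = 0 := by rw [h4, SimpleGraph.dist_self]
      have h1 : T.dist y' b ≤ q.length := by
        rw [← h5, SimpleGraph.dist_comm]; exact dist_le q
      rw [length_cons]
      omega

lemma cross_dist (hT : T.IsTree) {a b x y : V} (hab : T.Adj a b)
    (hx : TSide T a b x) (hy : TSide T b a y) :
    T.dist x y = T.dist x a + 1 + T.dist y b := by
  refine le_antisymm ?_ ?_
  · have h1 : T.dist x y ≤ T.dist x a + T.dist a y := hT.isConnected.dist_triangle
    have h2 : T.dist a y ≤ T.dist a b + T.dist b y := hT.isConnected.dist_triangle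
    have h3 : T.dist a b = 1 := dist_eq_one_iff_adj.mpr hab
    have h4 : T.dist b y = T.dist y b := SimpleGraph.dist_comm ..
    omega
  · obtain ⟨p, hl⟩ := hT.isConnected.exists_walk_length_eq_dist x y
    rw [← hl]
    exact cross_walk_length hT hab p hx hy

lemma induce_edist_le {s : Set V} :
    ∀ {u v : V} (p : T.Walk u v), (∀ x ∈ p.support, x ∈ s) →
      ∀ (hu : u ∈ s) (hv : v ∈ s),
        (T.induce s).edist ⟨u, hu⟩ ⟨v, hv⟩ ≤ (p.length : ℕ∞)
  | _, _, Walk.nil, _, hu, hv => by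
      simp [SimpleGraph.edist_self]
  | u, v, Walk.cons (v := w) h q, hp, hu, hv => by
      have hw : w ∈ s := hp w (by simp)
      have h1 : (T.induce s).Adj ⟨u, hu⟩ ⟨w, hw⟩ := by
        simp [SimpleGraph.comap_adj, h]
      have h2 : (T.induce s).edist ⟨u, hu⟩ ⟨w, hw⟩ ≤ 1 :=
        (edist_eq_one_iff_adj.mpr h1).le
      have h3 := induce_edist_le q (fun x hx => hp x (by simp [hx])) hw hv
      calc (T.induce s).edist ⟨u, hu⟩ ⟨v, hv⟩
          ≤ (T.induce s).edist ⟨u, hu⟩ ⟨w, hw⟩ + (T.induce s).edist ⟨w, hw⟩ ⟨v, hv⟩ :=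
            SimpleGraph.edist_triangle
        _ ≤ 1 + q.length := add_le_add h2 h3
        _ = ((Walk.cons h q).length : ℕ∞) := by
            rw [length_cons]; push_cast; ring

lemma ediam_le_of_iso {W : Type*} {G : SimpleGraph V} {H : SimpleGraph W} (e : G ≃g H) :
    H.ediam ≤ G.ediam := by
  apply ediam_le_of_edist_le
  intro u v
  have h1 : H.edist (e (e.symm u)) (e (e.symm v)) ≤ G.edist (e.symm u) (e.symm v) := by
    by_cases hr : G.edist (e.symm u) (e.symm v) = ⊤
    · rw [hr]; exact le_top
    · obtain ⟨p, hp⟩ := exists_walk_of_edist_ne_top hr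
      calc H.edist _ _ ≤ ((p.map e.toHom).length : ℕ∞) := edist_le _
        _ = (p.length : ℕ∞) := by rw [Walk.length_map]
        _ = _ := by rw [hp]
  simpa using h1.trans edist_le_ediam

lemma part_ediam_le (hT : T.IsTree) {a b : V} (hab : T.Adj a b) {r : ℕ}
    (hrb : ∀ z, T.dist z b ≤ r) :
    (T.induce {v | TSide T a b v}).ediam ≤ ((2 * r - 2 : ℕ) : ℕ∞) := by
  apply ediam_le_of_edist_le
  rintro ⟨x, hx⟩ ⟨y, hy⟩
  obtain ⟨p1, hp1, hl1, hs1⟩ := exists_path_in_side hT hab hx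
  obtain ⟨p2, hp2, hl2, hs2⟩ := exists_path_in_side hT hab hy
  have hmem : ∀ z ∈ (p1.append p2.reverse).support, z ∈ {v | TSide T a b v} := by
    intro z hz
    rw [mem_support_append_iff] at hz
    rcases hz with hz | hz
    · exact hs1 z hz
    · rw [support_reverse, List.mem_reverse] at hz
      exact hs2 z hz
  have h1 := induce_edist_le (p1.append p2.reverse) hmem hx hy
  refine h1.trans ?_
  have hx' : T.dist x b = T.dist x a + 1 := hx
  have hy' : T.dist y b = T.dist y a + 1 := hy
  have hxa : T.dist x a + 1 ≤ r := by have := hrb x; omega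
  have hya : T.dist y a + 1 ≤ r := by have := hrb y; omega
  have hlen : (p1.append p2.reverse).length = T.dist x a + T.dist y a := by
    rw [length_append, length_reverse, hl1, hl2]
  rw [hlen]
  exact_mod_cast by omega

lemma ecc_facts [Fintype V] [Nonempty V] (hconn : T.Connected) (c : V) :
    ∃ r : ℕ, (⨆ u, T.edist c u) = (r : ℕ∞) ∧ (∀ z, T.dist c z ≤ r) ∧
      ∃ z, T.dist c z = r := by
  have hedist : ∀ u v : V, T.edist u v = (T.dist u v : ℕ∞) := by
    intro u v
    exact (ENat.coe_toNat (by rw [edist_ne_top_iff_reachable]; exact hconn u v)).symm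
  obtain ⟨u0, hu0⟩ := exists_eq_ciSup_of_finite (f := fun u => T.edist c u)
  refine ⟨T.dist c u0, ?_, ?_, ⟨u0, rfl⟩⟩
  · rw [← hu0, hedist]
  · intro z
    have h1 : T.edist c z ≤ ⨆ u, T.edist c u := le_iSup (fun u => T.edist c u) z
    rw [← hu0, hedist, hedist] at h1
    exact_mod_cast h1

end TreeHelpers

open Walk

/-- If `T` is a finite tree with at least two vertices whose center consists of exactly two
vertices, then the discrete Borsuk number of `T` is `2`. -/
theorem borsukNumber_tree_of_center_two [Fintype V] [DecidableEq V] (T : SimpleGraph V)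
    (htree : T.IsTree) (hcard : 2 ≤ Fintype.card V)
    (hcenter : (graphCenter T).ncard = 2) :
    borsukNumber T = 2 := by
  have hconn := htree.isConnected
  have hne : Nonempty V := Fintype.card_pos_iff.mp (by omega)
  have hedist : ∀ u v : V, T.edist u v = (T.dist u v : ℕ∞) := by
    intro u v
    exact (ENat.coe_toNat (by rw [edist_ne_top_iff_reachable]; exact hconn u v)).symm
  have hdc : ∀ a b : V, T.dist a b = T.dist b a := fun a b => SimpleGraph.dist_comm
  obtain ⟨c1, c2, hc12, hcen⟩ := Set.ncard_eq_two.mp hcenter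
  have hc1 : c1 ∈ graphCenter T := by rw [hcen]; exact Set.mem_insert _ _
  have hc2 : c2 ∈ graphCenter T := by rw [hcen]; exact Set.mem_insert_of_mem _ rfl
  obtain ⟨r, hr_eq, hbound1, z1, hz1⟩ := ecc_facts hconn c1
  have hecc1 : graphEccent T c1 = (r : ℕ∞) := hr_eq
  have hecc2 : graphEccent T c2 = (r : ℕ∞) := by
    rw [← hecc1]; exact le_antisymm (hc2 c1) (hc1 c2)
  have hbound2 : ∀ z, T.dist c2 z ≤ r := by
    obtain ⟨r2, hr2_eq, hb2, _⟩ := ecc_facts hconn c2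
    have : (r2 : ℕ∞) = (r : ℕ∞) := by
      rw [← hr2_eq]; exact hecc2
    have hrr : r2 = r := by exact_mod_cast this
    rwa [hrr] at hb2
  have hcrit : ∀ w, graphEccent T w ≤ (r : ℕ∞) → w = c1 ∨ w = c2 := by
    intro w hw
    have : w ∈ graphCenter T := by
      intro u
      exact le_trans (by rw [← hecc1] at hw; exact hw) (hc1 u)
    rw [hcen] at this
    simpa using this
  have hr1 : 1 ≤ r := by
    have h1 : 0 < T.dist c1 c2 := hconn.pos_dist_of_ne hc12
    have := hbound1 c2
    omega
  -- adjacency of the two centers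
  have hadj : T.Adj c1 c2 := by
    obtain ⟨p, hp, hlp⟩ := hconn.exists_path_of_dist c1 c2
    cases p with
    | nil => exact absurd rfl hc12
    | @cons _ w _ h q =>
      have hq : T.dist w c2 ≤ q.length := dist_le q
      rw [length_cons] at hlp
      have htr : T.dist c1 c2 ≤ T.dist c1 w + T.dist w c2 := hconn.dist_triangle
      have hc1w : T.dist c1 w = 1 := dist_eq_one_iff_adj.mpr h
      have hwc2 : T.dist w c2 + 1 = T.dist c1 c2 := by omega
      -- the neighbor w has eccentricity ≤ r
      have hwecc : ∀ z, T.dist w z ≤ r := by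
        intro z
        rcases tree_side_dichotomy htree h.symm z with hcase | hcase
        · -- dist z w + 1 = dist z c1
          have := hbound1 z
          rw [hdc c1 z] at this
          rw [hdc w z]
          omega
        · -- z on the c1-side of edge (w, c1)
          have hzside : TSide T c1 w z := hcase.symm
          have hc2side : TSide T w c1 c2 := by
            show T.dist c2 c1 = T.dist c2 w + 1
            rw [hdc c2 c1, hdc c2 w]
            omega
          have hcross := cross_dist htree h.symm hc2side hzside
          have h5 := hbound2 z
          rw [hdc w z]
          omega
      have hweccE : graphEccent T w ≤ (r : ℕ∞) := by
        refine iSup_le fun z => ?_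
        rw [hedist]
        exact_mod_cast hwecc z
      rcases hcrit w hweccE with h1 | h1
      · exact absurd h1.symm h.ne
      · rwa [← h1]
  -- locate the far vertices on each side
  classical
  have hu0side : TSide T c2 c1 z1 := by
    rcases tside_or htree hadj z1 with hs | hs
    · exfalso
      have : T.dist z1 c2 = r + 1 := by
        have h1 : T.dist z1 c2 = T.dist z1 c1 + 1 := hs
        rw [hdc z1 c1, hz1] at h1
        exact h1
      have h2 := hbound2 z1
      rw [hdc c2 z1] at h2
      omega
    · exact hs
  have hz1c2 : T.dist z1 c2 + 1 = r := by
    have h1 : T.dist z1 c1 = T.dist z1 c2 + 1 := hu0side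
    rw [hdc z1 c1, hz1] at h1
    omega
  obtain ⟨r2, hr2_eq, hb2, z2, hz2⟩ := ecc_facts hconn c2
  have hrr : r2 = r := by
    have : (r2 : ℕ∞) = (r : ℕ∞) := by rw [← hr2_eq]; exact hecc2
    exact_mod_cast this
  rw [hrr] at hz2
  have hu1side : TSide T c1 c2 z2 := by
    rcases tside_or htree hadj z2 with hs | hs
    · exact hs
    · exfalso
      have h1 : T.dist z2 c1 = T.dist z2 c2 + 1 := hs
      rw [hdc z2 c2, hz2] at h1
      have h2 := hbound1 z2
      rw [hdc c1 z2] at h2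
      omega
  have hz2c1 : T.dist z2 c1 + 1 = r := by
    have h1 : T.dist z2 c2 = T.dist z2 c1 + 1 := hu1side
    rw [hdc z2 c2, hz2] at h1
    omega
  -- the diameter is at least 2r - 1
  have hcross := cross_dist htree hadj hu1side hu0side
  have hdiam : ((2 * r - 1 : ℕ) : ℕ∞) ≤ T.ediam := by
    have h1 : T.dist z2 z1 = 2 * r - 1 := by omega
    calc ((2 * r - 1 : ℕ) : ℕ∞) = (T.dist z2 z1 : ℕ∞) := by rw [h1]
      _ = T.edist z2 z1 := (hedist z2 z1).symm
      _ ≤ T.ediam := edist_le_ediam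
  -- the two-part partition
  set A : Finset V := Finset.univ.filter (fun v => T.dist v c2 = T.dist v c1 + 1) with hA
  have hmemA : ∀ v, v ∈ A ↔ TSide T c1 c2 v := by
    intro v; simp [hA, TSide]
  have hmemAc : ∀ v, v ∈ Aᶜ ↔ TSide T c2 c1 v := by
    intro v
    rw [Finset.mem_compl, hmemA]
    constructor
    · intro hv
      rcases tside_or htree hadj v with hs | hs
      · exact absurd hs hv
      · exact hs
    · intro hv hv'
      exact not_tside_both hv' hv
  have hc1A : c1 ∈ A := (hmemA c1).mpr (tside_self hadj)
  have hc2Ac : c2 ∈ Aᶜ := (hmemAc c2).mpr (tside_self hadj.symm)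
  have hAne : A ≠ Aᶜ := by
    intro hcontra
    have := hc1A
    rw [hcontra, Finset.mem_compl] at this
    exact this hc1A
  have hsetA : (↑A : Set V) = {v | TSide T c1 c2 v} := by
    ext v; simpa using hmemA v
  have hsetAc : (↑(Aᶜ) : Set V) = {v | TSide T c2 c1 v} := by
    ext v; simpa using hmemAc v
  have hcastlt : ((2 * r - 2 : ℕ) : ℕ∞) < ((2 * r - 1 : ℕ) : ℕ∞) := by
    exact_mod_cast by omega
  have hApart : (T.induce (↑A : Set V)).ediam < T.ediam := by
    rw [hsetA]
    have h1 := part_ediam_le htree hadj (r := r) (fun z => by rw [hdc z c2]; exact hbound2 z)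
    exact lt_of_le_of_lt h1 (lt_of_lt_of_le hcastlt hdiam)
  have hAcpart : (T.induce (↑(Aᶜ) : Set V)).ediam < T.ediam := by
    rw [hsetAc]
    have h1 := part_ediam_le htree hadj.symm (r := r) (fun z => by rw [hdc z c1]; exact hbound1 z)
    exact lt_of_le_of_lt h1 (lt_of_lt_of_le hcastlt hdiam)
  -- assemble the partition
  have hP : ∃ P : Finpartition (Finset.univ : Finset V),
      IsBorsukPartition T P ∧ P.parts.card = 2 := by
    refine ⟨⟨{A, Aᶜ}, ?_, ?_, ?_⟩, ?_, ?_⟩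
    · exact (Finset.supIndep_pair hAne).mpr disjoint_compl_right
    · simp [Finset.sup_insert, Finset.sup_singleton]
    · intro hcontra
      rcases Finset.mem_insert.mp hcontra with h1 | h1
      · exact (Finset.nonempty_iff_ne_empty.mp ⟨c1, hc1A⟩) h1.symm
      · rw [Finset.mem_singleton] at h1
        exact (Finset.nonempty_iff_ne_empty.mp ⟨c2, hc2Ac⟩) h1.symm
    · intro s hs
      rcases Finset.mem_insert.mp hs with h1 | h1
      · rw [h1]; exact hApart
      · rw [Finset.mem_singleton] at h1
        rw [h1]; exact hAcpart
    · exact Finset.card_pair hAne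
  -- lower bound: every Borsuk partition has at least two parts
  have hlow : ∀ n ∈ {n | ∃ P : Finpartition (Finset.univ : Finset V),
      IsBorsukPartition T P ∧ P.parts.card = n}, 2 ≤ n := by
    rintro n ⟨P, hPB, hPc⟩
    by_contra hn
    push_neg at hn
    interval_cases n
    · have h1 : P.parts = ∅ := Finset.card_eq_zero.mp hPc
      have h2 := P.sup_parts
      rw [h1, Finset.sup_empty] at h2
      have : (c1 : V) ∈ (⊥ : Finset V) := by rw [h2]; exact Finset.mem_univ c1
      simp at this
    · obtain ⟨s, hs⟩ := Finset.card_eq_one.mp hPc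
      have h2 := P.sup_parts
      rw [hs, Finset.sup_singleton, id] at h2
      have h3 := hPB s (by rw [hs]; exact Finset.mem_singleton_self s)
      rw [h2, Finset.coe_univ] at h3
      have h4 : T.ediam ≤ (T.induce (Set.univ : Set V)).ediam :=
        ediam_le_of_iso (induceUnivIso T)
      exact absurd h3 (not_lt.mpr h4)
  exact le_antisymm (Nat.sInf_le hP) (le_csInf ⟨2, hP⟩ hlow)
end
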